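/- The predicate Eq_a (on pairs of words, stating the two words have equal numbers of occurrences of the letter a) is interdefinable with Only_as (stating the second word equals a^{|x|_a} where x is the first word) using only word equations: specifically, for words x, y, Only_as(x, y) holds if and only if y·a = a·y and Eq_a(x, y); and Eq_a(x, y) holds if and only if there exists z with Only_as(x, z) and Only_as(y, z). -/
import Mathlib

lemma aux_rep {A : Type*} (a : A) : ∀ y : List A, y ++ [a] = a :: y →
    y = List.replicate y.length a := by
  intro y
  induction y with
  | nil => intro; rfl
  | cons c t ih =>
    intro h
    simp only [List.cons_append, List.cons.injEq] at h
    obtain ⟨rfl, h2⟩ := h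
    simp [List.replicate_succ]
    exact ih h2

/-- `Eq_a` and `Only_as` are interdefinable using word equations:
`Only_as(x,y) ↔ ya = ay ∧ Eq_a(x,y)` and `Eq_a(x,y) ↔ ∃ z, Only_as(x,z) ∧ Only_as(y,z)`. -/
theorem stmt12 {A : Type*} [DecidableEq A] (a : A) :
    (∀ x y : List A,
        y = List.replicate (x.count a) a ↔ (y ++ [a] = [a] ++ y ∧ x.count a = y.count a)) ∧
    (∀ x y : List A,
        x.count a = y.count a ↔
          ∃ z : List A, z = List.replicate (x.count a) a ∧ z = List.replicate (y.count a) a) := by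
  constructor
  · intro x y
    constructor
    · rintro rfl
      refine ⟨?_, ?_⟩
      · simp [List.replicate_succ, ← List.replicate_succ']
      · simp
    · rintro ⟨h1, h2⟩
      have hy := aux_rep a y (by simpa using h1)
      rw [hy] at h2 ⊢
      simp at h2
      simp [h2]
  · intro x y
    constructor
    · intro h
      exact ⟨_, rfl, by rw [h]⟩
    · rintro ⟨z, rfl, h⟩
      have := congrArg List.length h
      simpa using this
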